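/- The persistence-sphere map is injective: if μ, ν are integrable positive measures on X and S(μ) = S(ν) as functions on the unit sphere S², then μ = ν. (Key step: if μ − ν = (π_Δ)_#(ν − μ) as signed measures, then since the two sides are supported on the disjoint sets X and Δ, both vanish, so μ = ν.) -/
import Mathlib


open MeasureTheory

/-- The inner product of `ℝ³ = ℝ × ℝ × ℝ`. -/
noncomputable def inner3 (v a : ℝ × ℝ × ℝ) : ℝ :=
  v.1 * a.1 + v.2.1 * a.2.1 + v.2.2 * a.2.2

/-- The lift of a planar point: `(1, p) ∈ ℝ³`. -/
def lift (p : ℝ × ℝ) : ℝ × ℝ × ℝ := (1, p.1, p.2)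

/-- The diagonal projection `π_Δ(x,y) = ((x+y)/2, (x+y)/2)`. -/
noncomputable def piD (p : ℝ × ℝ) : ℝ × ℝ := ((p.1 + p.2) / 2, (p.1 + p.2) / 2)

/-- The Euclidean norm of a point of `ℝ²`. -/
noncomputable def enorm2 (p : ℝ × ℝ) : ℝ := Real.sqrt (p.1 ^ 2 + p.2 ^ 2)

/-- The (positive) lift-zonoid transform of a measure. -/
noncomputable def LZT (η : Measure (ℝ × ℝ)) (v : ℝ × ℝ × ℝ) : ℝ :=
  ∫ p, max 0 (inner3 v (lift p)) ∂η

/-- The persistence sphere of `μ`: `S(μ)(v) = Λ(μ − (π_Δ)_#μ)(v)`. -/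
noncomputable def PSph (μ : Measure (ℝ × ℝ)) (v : ℝ × ℝ × ℝ) : ℝ :=
  LZT μ v - LZT (μ.map piD) v

lemma enorm2_cont : Continuous enorm2 :=
  by unfold enorm2; fun_prop

lemma integrable_enorm2 (η : Measure (ℝ × ℝ))
    (h : ∫⁻ p, ENNReal.ofReal (enorm2 p) ∂η < ⊤) : Integrable enorm2 η := by
  refine ⟨enorm2_cont.aestronglyMeasurable, ?_⟩
  exact (hasFiniteIntegral_iff_ofReal (Filter.Eventually.of_forall fun p =>
    (Real.sqrt_nonneg _ : 0 ≤ enorm2 p))).mpr h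

lemma integrable_lzt (η : Measure (ℝ × ℝ)) [IsFiniteMeasure η]
    (h : ∫⁻ p, ENNReal.ofReal (enorm2 p) ∂η < ⊤) (v : ℝ × ℝ × ℝ) :
    Integrable (fun p => max 0 (inner3 v (lift p))) η := by
  have he := integrable_enorm2 η h
  have h1 : Integrable (fun p : ℝ × ℝ => p.1) η := by
    refine he.mono' measurable_fst.aestronglyMeasurable ?_
    refine Filter.Eventually.of_forall fun p => ?_
    simp only [Real.norm_eq_abs, enorm2]
    rw [← Real.sqrt_sq_eq_abs]
    exact Real.sqrt_le_sqrt (by nlinarith [sq_nonneg p.2])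
  have h2 : Integrable (fun p : ℝ × ℝ => p.2) η := by
    refine he.mono' measurable_snd.aestronglyMeasurable ?_
    refine Filter.Eventually.of_forall fun p => ?_
    simp only [Real.norm_eq_abs, enorm2]
    rw [← Real.sqrt_sq_eq_abs]
    exact Real.sqrt_le_sqrt (by nlinarith [sq_nonneg p.1])
  have hi : Integrable (fun p => inner3 v (lift p)) η := by
    have : (fun p : ℝ × ℝ => inner3 v (lift p))
        = fun p => v.1 + (v.2.1 * p.1 + v.2.2 * p.2) := by
      funext p; simp [inner3, lift]; ring
    rw [this]
    exact (integrable_const _).add ((h1.const_mul _).add (h2.const_mul _))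
  simpa [max_comm] using hi.pos_part

lemma lzt_smul (η : Measure (ℝ × ℝ)) (c : ℝ) (hc : 0 ≤ c) (v : ℝ × ℝ × ℝ) :
    LZT η (c * v.1, c * v.2.1, c * v.2.2) = c * LZT η v := by
  unfold LZT
  rw [← MeasureTheory.integral_const_mul]
  congr 1; funext p
  have : inner3 (c * v.1, c * v.2.1, c * v.2.2) (lift p) = c * inner3 v (lift p) := by
    simp [inner3, lift]; ring
  rw [this, mul_max_of_nonneg _ _ hc, mul_zero]

lemma lzt_add (η₁ η₂ : Measure (ℝ × ℝ)) [IsFiniteMeasure η₁] [IsFiniteMeasure η₂]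
    (h₁ : ∫⁻ p, ENNReal.ofReal (enorm2 p) ∂η₁ < ⊤)
    (h₂ : ∫⁻ p, ENNReal.ofReal (enorm2 p) ∂η₂ < ⊤) (v : ℝ × ℝ × ℝ) :
    LZT (η₁ + η₂) v = LZT η₁ v + LZT η₂ v :=
  integral_add_measure (integrable_lzt η₁ h₁ v) (integrable_lzt η₂ h₂ v)

lemma piD_meas : Measurable piD := by unfold piD; fun_prop

lemma enorm2_piD_le (p : ℝ × ℝ) : enorm2 (piD p) ≤ enorm2 p := by
  unfold enorm2 piD
  exact Real.sqrt_le_sqrt (by nlinarith [sq_nonneg (p.1 - p.2)])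

lemma map_lint (η : Measure (ℝ × ℝ))
    (h : ∫⁻ p, ENNReal.ofReal (enorm2 p) ∂η < ⊤) :
    ∫⁻ p, ENNReal.ofReal (enorm2 p) ∂(η.map piD) < ⊤ := by
  rw [lintegral_map (by exact (ENNReal.measurable_ofReal.comp enorm2_cont.measurable)) piD_meas]
  exact lt_of_le_of_lt (lintegral_mono fun p =>
    ENNReal.ofReal_le_ofReal (enorm2_piD_le p)) h

lemma psph_smul (η : Measure (ℝ × ℝ)) (c : ℝ) (hc : 0 ≤ c) (v : ℝ × ℝ × ℝ) :
    PSph η (c * v.1, c * v.2.1, c * v.2.2) = c * PSph η v := by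
  unfold PSph; rw [lzt_smul _ _ hc, lzt_smul _ _ hc]; ring


/-- Injectivity of the persistence-sphere map: assuming injectivity of the lift-zonoid
transform on positive integrable measures, if `μ, ν` are integrable positive measures on
`X = {x < y}` and `S(μ) = S(ν)` on the unit sphere `S² ⊂ ℝ³`, then `μ = ν`. -/
theorem persistenceSphere_injective
    (hinj : ∀ η₁ η₂ : Measure (ℝ × ℝ), IsFiniteMeasure η₁ → IsFiniteMeasure η₂ →
      (∫⁻ p, ENNReal.ofReal (enorm2 p) ∂η₁ < ⊤) →
      (∫⁻ p, ENNReal.ofReal (enorm2 p) ∂η₂ < ⊤) →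
      (∀ v : ℝ × ℝ × ℝ, LZT η₁ v = LZT η₂ v) → η₁ = η₂)
    (μ ν : Measure (ℝ × ℝ)) (hμfin : IsFiniteMeasure μ) (hνfin : IsFiniteMeasure ν)
    (hμX : μ {p : ℝ × ℝ | ¬ p.1 < p.2} = 0) (hνX : ν {p : ℝ × ℝ | ¬ p.1 < p.2} = 0)
    (hμint : ∫⁻ p, ENNReal.ofReal (enorm2 p) ∂μ < ⊤)
    (hνint : ∫⁻ p, ENNReal.ofReal (enorm2 p) ∂ν < ⊤)
    (hS : ∀ v : ℝ × ℝ × ℝ, v.1 ^ 2 + v.2.1 ^ 2 + v.2.2 ^ 2 = 1 →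
      PSph μ v = PSph ν v) :
    μ = ν := by
  haveI := hμfin; haveI := hνfin
  -- extend hS to all of ℝ³ by positive homogeneity
  have hS' : ∀ v : ℝ × ℝ × ℝ, PSph μ v = PSph ν v := by
    intro v
    rcases eq_or_ne v 0 with rfl | hv
    · simp [PSph, LZT, inner3, lift]
    · have hpos : 0 < v.1 ^ 2 + v.2.1 ^ 2 + v.2.2 ^ 2 := by
        rcases lt_or_eq_of_le (by positivity : (0:ℝ) ≤ v.1 ^ 2 + v.2.1 ^ 2 + v.2.2 ^ 2)
          with h | h
        · exact h
        · exfalso; apply hv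
          have h1 : v.1 = 0 := by nlinarith [sq_nonneg v.1, sq_nonneg v.2.1, sq_nonneg v.2.2]
          have h2 : v.2.1 = 0 := by nlinarith [sq_nonneg v.1, sq_nonneg v.2.1, sq_nonneg v.2.2]
          have h3 : v.2.2 = 0 := by nlinarith [sq_nonneg v.1, sq_nonneg v.2.1, sq_nonneg v.2.2]
          exact Prod.ext h1 (Prod.ext h2 h3)
      set r := Real.sqrt (v.1 ^ 2 + v.2.1 ^ 2 + v.2.2 ^ 2) with hr
      have hrpos : 0 < r := Real.sqrt_pos.mpr hpos
      have hr2 : r ^ 2 = v.1 ^ 2 + v.2.1 ^ 2 + v.2.2 ^ 2 := Real.sq_sqrt hpos.le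
      set w : ℝ × ℝ × ℝ := (v.1 / r, v.2.1 / r, v.2.2 / r) with hw
      have hws : w.1 ^ 2 + w.2.1 ^ 2 + w.2.2 ^ 2 = 1 := by
        simp only [hw]; field_simp; linarith [hr2]
      have hv' : v = (r * w.1, r * w.2.1, r * w.2.2) := by
        simp only [hw]; refine Prod.ext ?_ (Prod.ext ?_ ?_) <;> field_simp
      calc PSph μ v = r * PSph μ w := by rw [hv'] at *; exact psph_smul μ r hrpos.le w
        _ = r * PSph ν w := by rw [hS w hws]
        _ = PSph ν v := by rw [hv'] at *; exact (psph_smul ν r hrpos.le w).symm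
  -- the two combined measures agree under LZT
  have hmain : ∀ v, LZT (μ + ν.map piD) v = LZT (ν + μ.map piD) v := by
    intro v
    rw [lzt_add _ _ hμint (map_lint ν hνint) v, lzt_add _ _ hνint (map_lint μ hμint) v]
    have := hS' v
    unfold PSph at this; linarith
  have heq : μ + ν.map piD = ν + μ.map piD := by
    refine hinj _ _ inferInstance inferInstance ?_ ?_ hmain
    · rw [lintegral_add_measure]
      exact ENNReal.add_lt_top.mpr ⟨hμint, map_lint ν hνint⟩
    · rw [lintegral_add_measure]
      exact ENNReal.add_lt_top.mpr ⟨hνint, map_lint μ hμint⟩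
  -- conclude by evaluating on subsets of X
  have hXm : MeasurableSet {p : ℝ × ℝ | p.1 < p.2} :=
    measurableSet_lt measurable_fst measurable_snd
  ext s hs
  have hpre : piD ⁻¹' (s ∩ {p : ℝ × ℝ | p.1 < p.2}) = ∅ := by
    ext p
    simp only [Set.mem_preimage, Set.mem_inter_iff, Set.mem_setOf_eq, Set.mem_empty_iff_false,
      iff_false, not_and, piD]
    intro _; exact lt_irrefl _
  have key : ∀ η : Measure (ℝ × ℝ), (η.map piD) (s ∩ {p : ℝ × ℝ | p.1 < p.2}) = 0 := by
    intro η
    rw [Measure.map_apply piD_meas (hs.inter hXm), hpre, measure_empty]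
  have h1 := congrArg (fun m : Measure (ℝ × ℝ) => m (s ∩ {p : ℝ × ℝ | p.1 < p.2})) heq
  simp only [Measure.add_apply, key μ, key ν, add_zero] at h1
  have hsplit : ∀ η : Measure (ℝ × ℝ), η {p : ℝ × ℝ | ¬ p.1 < p.2} = 0 →
      η s = η (s ∩ {p : ℝ × ℝ | p.1 < p.2}) := by
    intro η hη
    have hdiff : η (s \ {p : ℝ × ℝ | p.1 < p.2}) = 0 :=
      measure_mono_null (fun p hp => hp.2) hη
    rw [← measure_inter_add_diff s hXm, hdiff, add_zero]
  rw [hsplit μ hμX, hsplit ν hνX, h1]
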